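/- For any based matrix T over an integral domain R, σ(T_•) = σ(T), where T_• is a primitive based matrix homologous to T; and any based matrix over R homologous to a hyperbolic based matrix is itself hyperbolic. -/

import Mathlib

/-!  Based skew-symmetric matrices over an abelian group `H`, after Turaev.
A based matrix is a triple `(G, s, b)` where `G` is a finite set, `s ∈ G`,
and `b : G × G → H` is skew-symmetric.  We realize the finite set `G` as a
finite set of natural numbers; the values of `b` outside `G` are irrelevant
(isomorphism, homology, fillings etc. only refer to values on `G`). -/

/-- The data of a based matrix over `H`: a finite carrier `G ⊆ ℕ`, a base
point `s` and a pairing `b`. -/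
structure PreBM (H : Type*) where
  /-- the underlying finite set -/
  G : Finset ℕ
  /-- the base point `s` -/
  s : ℕ
  /-- the pairing -/
  b : ℕ → ℕ → H

variable {H : Type*} [AddCommGroup H]

/-- `(G, s, b)` is a based matrix: `s ∈ G` and `b` is skew-symmetric on `G`
(with vanishing diagonal). -/
def IsBM (T : PreBM H) : Prop :=
  T.s ∈ T.G ∧ (∀ g ∈ T.G, ∀ h ∈ T.G, T.b g h = -T.b h g) ∧
    ∀ g ∈ T.G, T.b g g = 0

/-- Isomorphism of based matrices: a bijection of the carriers preserving the
base point and the pairing. -/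
def BMIso (T T' : PreBM H) : Prop :=
  ∃ f : ℕ → ℕ, Set.BijOn f (T.G : Set ℕ) (T'.G : Set ℕ) ∧ f T.s = T'.s ∧
    ∀ g ∈ T.G, ∀ h ∈ T.G, T'.b (f g) (f h) = T.b g h

/-- `g` is an annihilating element of `T`. -/
def Annihilating (T : PreBM H) (g : ℕ) : Prop :=
  g ∈ T.G ∧ g ≠ T.s ∧ ∀ h ∈ T.G, T.b g h = 0

/-- `g` is a core element of `T`. -/
def CoreElt (T : PreBM H) (g : ℕ) : Prop :=
  g ∈ T.G ∧ g ≠ T.s ∧ ∀ h ∈ T.G, T.b g h = T.b T.s h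

/-- `g₁, g₂` is a complementary pair of elements of `T`. -/
def ComplPair (T : PreBM H) (g₁ g₂ : ℕ) : Prop :=
  g₁ ∈ T.G ∧ g₂ ∈ T.G ∧ g₁ ≠ T.s ∧ g₂ ≠ T.s ∧ g₁ ≠ g₂ ∧
    ∀ h ∈ T.G, T.b g₁ h + T.b g₂ h = T.b T.s h

/-- A based matrix is primitive if it has no annihilating elements, no core
elements and no complementary pairs. -/
def Primitive (T : PreBM H) : Prop :=
  (∀ g, ¬Annihilating T g) ∧ (∀ g, ¬CoreElt T g) ∧ ∀ g₁ g₂, ¬ComplPair T g₁ g₂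

/-- Elementary extension `M₁`: adjoin one annihilating element. -/
def IsExt1 (T T' : PreBM H) : Prop :=
  T'.s = T.s ∧ ∃ g, g ∉ T.G ∧ T'.G = insert g T.G ∧
    (∀ x ∈ T.G, ∀ y ∈ T.G, T'.b x y = T.b x y) ∧
    ∀ h ∈ T'.G, T'.b g h = 0

/-- Elementary extension `M₂`: adjoin one core element. -/
def IsExt2 (T T' : PreBM H) : Prop :=
  T'.s = T.s ∧ ∃ g, g ∉ T.G ∧ T'.G = insert g T.G ∧
    (∀ x ∈ T.G, ∀ y ∈ T.G, T'.b x y = T.b x y) ∧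
    ∀ h ∈ T'.G, T'.b g h = T'.b T'.s h

/-- Elementary extension `M₃`: adjoin a pair of complementary elements. -/
def IsExt3 (T T' : PreBM H) : Prop :=
  T'.s = T.s ∧ ∃ g₁ g₂, g₁ ∉ T.G ∧ g₂ ∉ T.G ∧ g₁ ≠ g₂ ∧
    T'.G = insert g₁ (insert g₂ T.G) ∧
    (∀ x ∈ T.G, ∀ y ∈ T.G, T'.b x y = T.b x y) ∧
    ∀ h ∈ T'.G, T'.b g₁ h + T'.b g₂ h = T'.b T'.s h

/-- One elementary extension between based matrices. -/
def StepExt (T T' : PreBM H) : Prop :=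
  IsBM T ∧ IsBM T' ∧ (IsExt1 T T' ∨ IsExt2 T T' ∨ IsExt3 T T')

/-- Two based matrices are homologous if they are related by a finite
sequence of elementary extensions, inverse extensions and isomorphisms. -/
def Homologous : PreBM H → PreBM H → Prop :=
  Relation.EqvGen fun T T' => StepExt T T' ∨ (IsBM T ∧ IsBM T' ∧ BMIso T T')
variable {R : Type*} [CommRing R] [IsDomain R]

/-- `b(X, Y) = ∑_{g ∈ X, h ∈ Y} b(g, h)` for subsets `X, Y` of the carrier. -/
def bSet (T : PreBM R) (X Y : Finset ℕ) : R := ∑ g ∈ X, ∑ h ∈ Y, T.b g h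

/-- A simple filling of `T = (G, s, b)`: a finite family of disjoint subsets
of `G`, each of cardinality at most `2`, whose union is `G` and one of which
is `{s}`. -/
def IsSimpleFilling (T : PreBM R) (P : Finset (Finset ℕ)) : Prop :=
  ({T.s} : Finset ℕ) ∈ P ∧ (∀ X ∈ P, X.card ≤ 2) ∧
    (∀ X ∈ P, ∀ Y ∈ P, X ≠ Y → Disjoint X Y) ∧ P.biUnion id = T.G

/-- Half the rank of the skew-symmetric matrix `(b(X_i, X_j))_{i,j}` of a
simple filling. -/
noncomputable def sigmaFill (T : PreBM R) (P : Finset (Finset ℕ)) : ℕ :=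
  (Matrix.of fun X Y : {A // A ∈ P} => bSet T X.1 Y.1).rank / 2

/-- The genus `σ(T)` of a based matrix: the minimum of `σ(𝒳)` over all simple
fillings `𝒳` of `T`. -/
noncomputable def bmGenus (T : PreBM R) : ℕ :=
  sInf {n : ℕ | ∃ P : Finset (Finset ℕ), IsSimpleFilling T P ∧ n = sigmaFill T P}

/-- A based matrix is hyperbolic if its genus is `0`. -/
def Hyperbolic {R : Type*} [CommRing R] [IsDomain R] (T : PreBM R) : Prop :=
  bmGenus T = 0


set_option linter.unusedSectionVars false
set_option linter.unusedVariables false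
set_option maxHeartbeats 1000000

lemma fill_subset {T : PreBM R} {P : Finset (Finset ℕ)} (hP : IsSimpleFilling T P)
    {X : Finset ℕ} (hX : X ∈ P) : X ⊆ T.G := by
  rw [← hP.2.2.2]
  intro a ha
  exact Finset.mem_biUnion.2 ⟨X, hX, ha⟩

lemma biUnion_erase {T : PreBM R} {P : Finset (Finset ℕ)} (hP : IsSimpleFilling T P)
    {X : Finset ℕ} (hX : X ∈ P) : (P.erase X).biUnion id = T.G \ X := by
  ext a
  simp only [Finset.mem_biUnion, Finset.mem_erase, id, Finset.mem_sdiff]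
  constructor
  · rintro ⟨Z, ⟨hZX, hZ⟩, ha⟩
    refine ⟨fill_subset hP hZ ha, fun haX => ?_⟩
    exact Finset.notMem_empty a ((hP.2.2.1 Z hZ X hX hZX).le_bot (Finset.mem_inter.2 ⟨ha, haX⟩))
  · rintro ⟨haG, haX⟩
    rw [← hP.2.2.2] at haG
    obtain ⟨Z, hZ, ha⟩ := Finset.mem_biUnion.1 haG
    exact ⟨Z, ⟨fun h => haX (h ▸ ha), hZ⟩, ha⟩

lemma fill_exists {T : PreBM R} (hT : IsBM T) : ∃ P, IsSimpleFilling T P := by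
  classical
  refine ⟨insert {T.s} ((T.G.erase T.s).image fun g => {g}), ?_, ?_, ?_, ?_⟩
  · exact Finset.mem_insert_self _ _
  · intro X hX
    rcases Finset.mem_insert.1 hX with h | h
    · simp [h]
    · obtain ⟨g, _, rfl⟩ := Finset.mem_image.1 h
      simp
  · intro X hX Y hY hne
    have hs : ∀ Z ∈ insert ({T.s} : Finset ℕ) ((T.G.erase T.s).image fun g => {g}),
        ∃ z : ℕ, Z = ({z} : Finset ℕ) := by
      intro Z hZ
      rcases Finset.mem_insert.1 hZ with h | h
      · exact ⟨T.s, h⟩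
      · obtain ⟨g, _, rfl⟩ := Finset.mem_image.1 h; exact ⟨g, rfl⟩
    obtain ⟨x, rfl⟩ := hs X hX
    obtain ⟨y, rfl⟩ := hs Y hY
    simp only [Finset.disjoint_singleton]
    exact fun h => hne (by rw [h])
  · ext a
    simp only [Finset.mem_biUnion, Finset.mem_insert, Finset.mem_image, id]
    constructor
    · rintro ⟨Z, h | ⟨g, hg, rfl⟩, ha⟩
      · rw [h, Finset.mem_singleton] at ha; exact ha ▸ hT.1
      · rw [Finset.mem_singleton] at ha
        exact ha ▸ Finset.mem_of_mem_erase hg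
    · intro ha
      by_cases h : a = T.s
      · exact ⟨{T.s}, Or.inl rfl, by simp [h]⟩
      · exact ⟨{a}, Or.inr ⟨a, Finset.mem_erase.2 ⟨h, ha⟩, rfl⟩, by simp⟩

lemma genus_le {T₁ T₂ : PreBM R} (hne : ∃ P, IsSimpleFilling T₁ P)
    (h : ∀ P, IsSimpleFilling T₁ P →
      ∃ P', IsSimpleFilling T₂ P' ∧ sigmaFill T₂ P' ≤ sigmaFill T₁ P) :
    bmGenus T₂ ≤ bmGenus T₁ := by
  obtain ⟨P₀, hP₀⟩ := hne
  have hSne : {n : ℕ | ∃ P, IsSimpleFilling T₁ P ∧ n = sigmaFill T₁ P}.Nonempty :=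
    ⟨sigmaFill T₁ P₀, P₀, hP₀, rfl⟩
  obtain ⟨P, hP, hPe⟩ := Nat.sInf_mem hSne
  obtain ⟨P', hP', hle⟩ := h P hP
  calc bmGenus T₂ ≤ sigmaFill T₂ P' := Nat.sInf_le ⟨P', hP', rfl⟩
    _ ≤ sigmaFill T₁ P := hle
    _ = bmGenus T₁ := hPe.symm

lemma bSet_skew {T : PreBM R} (hT : IsBM T) {X Y : Finset ℕ} (hX : X ⊆ T.G)
    (hY : Y ⊆ T.G) : bSet T X Y = -bSet T Y X := by
  unfold bSet
  rw [Finset.sum_comm (s := X), ← Finset.sum_neg_distrib]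
  refine Finset.sum_congr rfl fun h hh => ?_
  rw [← Finset.sum_neg_distrib]
  exact Finset.sum_congr rfl fun g hg => hT.2.1 g (hX hg) h (hY hh)

lemma sigma_le (T' T₁ T₂ : PreBM R) (hT' : IsBM T') (P₁ P₂ : Finset (Finset ℕ))
    (hG₁ : ∀ X ∈ P₁, X ⊆ T'.G) (hG₂ : ∀ X ∈ P₂, X ⊆ T'.G)
    (hb₁ : ∀ X ∈ P₁, ∀ Y ∈ P₁, bSet T₁ X Y = bSet T' X Y)
    (hb₂ : ∀ X ∈ P₂, ∀ Y ∈ P₂, bSet T₂ X Y = bSet T' X Y)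
    (c : Finset ℕ → Finset ℕ → R)
    (hc : ∀ X ∈ P₂, ∀ w ∈ T'.G, ∑ g ∈ X, T'.b g w
        = ∑ X' ∈ P₁, c X X' * ∑ g ∈ X', T'.b g w) :
    sigmaFill T₂ P₂ ≤ sigmaFill T₁ P₁ := by
  classical
  have hrow : ∀ X ∈ P₂, ∀ Y : Finset ℕ, Y ⊆ T'.G →
      bSet T' X Y = ∑ X' ∈ P₁, c X X' * bSet T' X' Y := by
    intro X hX Y hY
    unfold bSet
    rw [Finset.sum_comm]
    rw [Finset.sum_congr rfl fun h hh => hc X hX h (hY hh), Finset.sum_comm]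
    refine Finset.sum_congr rfl fun X' _ => ?_
    rw [← Finset.mul_sum, Finset.sum_comm]
  have hcol : ∀ Y ∈ P₂, ∀ X' : Finset ℕ, X' ⊆ T'.G →
      bSet T' X' Y = ∑ Y' ∈ P₁, c Y Y' * bSet T' X' Y' := by
    intro Y hY X' hX'
    rw [bSet_skew hT' hX' (hG₂ Y hY), hrow Y hY X' hX', ← Finset.sum_neg_distrib]
    refine Finset.sum_congr rfl fun Y' hY' => ?_
    rw [bSet_skew hT' (hG₁ Y' hY') hX']
    ring
  have key : ∀ X ∈ P₂, ∀ Y ∈ P₂,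
      bSet T' X Y = ∑ Y' ∈ P₁, (∑ X' ∈ P₁, c X X' * bSet T' X' Y') * c Y Y' := by
    intro X hX Y hY
    rw [hrow X hX Y (hG₂ Y hY)]
    rw [Finset.sum_congr rfl fun X' hX' => by
      rw [hcol Y hY X' (hG₁ X' hX'), Finset.mul_sum]]
    rw [Finset.sum_comm]
    refine Finset.sum_congr rfl fun Y' _ => ?_
    rw [Finset.sum_mul]
    exact Finset.sum_congr rfl fun X' _ => by ring
  set M1 : Matrix {A // A ∈ P₁} {A // A ∈ P₁} R :=
    Matrix.of fun X Y => bSet T₁ X.1 Y.1 with hM1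
  set L : Matrix {A // A ∈ P₁} {A // A ∈ P₂} R :=
    Matrix.of fun X' X => c X.1 X'.1 with hL
  have hM : (Matrix.of fun X Y : {A // A ∈ P₂} => bSet T₂ X.1 Y.1)
      = L.transpose * M1 * L := by
    ext X Y
    simp only [Matrix.of_apply, Matrix.mul_apply, Matrix.transpose_apply, hL, hM1]
    rw [hb₂ X.1 X.2 Y.1 Y.2, key X.1 X.2 Y.1 Y.2, ← Finset.sum_coe_sort P₁]
    refine Finset.sum_congr rfl fun Y' _ => ?_
    congr 1
    rw [← Finset.sum_coe_sort P₁]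
    refine Finset.sum_congr rfl fun X' _ => ?_
    rw [hb₁ X'.1 X'.2 Y'.1 Y'.2]
  unfold sigmaFill
  apply Nat.div_le_div_right
  rw [hM]
  calc (L.transpose * M1 * L).rank ≤ (L.transpose * M1).rank := Matrix.rank_mul_le_left _ _
    _ ≤ M1.rank := Matrix.rank_mul_le_right _ _

lemma bmiso_symm {T T' : PreBM R} (hT : IsBM T) (hT' : IsBM T') (h : BMIso T T') :
    BMIso T' T := by
  classical
  obtain ⟨f, hbij, hfs, hfb⟩ := h
  set g := Function.invFunOn f ↑T.G with hg
  have inv := hbij.invOn_invFunOn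
  have hbij' : Set.BijOn g (T'.G : Set ℕ) (T.G : Set ℕ) :=
    Set.BijOn.symm inv.symm hbij
  refine ⟨g, hbij', ?_, ?_⟩
  · rw [← hfs]
    exact inv.1 (by exact_mod_cast hT.1)
  · intro x hx y hy
    have hgx : g x ∈ (T.G : Set ℕ) := hbij'.mapsTo (by exact_mod_cast hx)
    have hgy : g y ∈ (T.G : Set ℕ) := hbij'.mapsTo (by exact_mod_cast hy)
    have := hfb (g x) (by exact_mod_cast hgx) (g y) (by exact_mod_cast hgy)
    rw [inv.2 (by exact_mod_cast hx), inv.2 (by exact_mod_cast hy)] at this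
    exact this.symm

lemma iso_fill_transfer {T T' : PreBM R} (hT : IsBM T) (hT' : IsBM T')
    (h : BMIso T T') (P : Finset (Finset ℕ)) (hP : IsSimpleFilling T P) :
    ∃ P', IsSimpleFilling T' P' ∧ sigmaFill T' P' = sigmaFill T P := by
  classical
  obtain ⟨f, hbij, hfs, hfb⟩ := h
  have hinj : Set.InjOn f ↑T.G := hbij.injOn
  set P' : Finset (Finset ℕ) := P.image (Finset.image f) with hP'def
  have himg : T.G.image f = T'.G := by
    apply Finset.coe_injective
    rw [Finset.coe_image]
    exact hbij.image_eq
  have hXinj : ∀ X ⊆ T.G, ∀ Y ⊆ T.G, X.image f = Y.image f → X = Y := by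
    intro X hX Y hY hXY
    ext a
    constructor
    · intro ha
      have : f a ∈ Y.image f := hXY ▸ Finset.mem_image_of_mem f ha
      obtain ⟨b, hb, hba⟩ := Finset.mem_image.1 this
      rwa [← hinj (by exact_mod_cast hY hb) (by exact_mod_cast hX ha) hba]
    · intro ha
      have : f a ∈ X.image f := hXY ▸ Finset.mem_image_of_mem f ha
      obtain ⟨b, hb, hba⟩ := Finset.mem_image.1 this
      rwa [← hinj (by exact_mod_cast hX hb) (by exact_mod_cast hY ha) hba]
  have hfill' : IsSimpleFilling T' P' := by
    refine ⟨?_, ?_, ?_, ?_⟩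
    · have : ({T'.s} : Finset ℕ) = ({T.s} : Finset ℕ).image f := by
        rw [Finset.image_singleton, hfs]
      rw [this]
      exact Finset.mem_image_of_mem _ hP.1
    · intro X hX
      obtain ⟨Z, hZ, rfl⟩ := Finset.mem_image.1 hX
      exact le_trans (Finset.card_image_le) (hP.2.1 Z hZ)
    · intro X hX Y hY hne
      obtain ⟨Z, hZ, rfl⟩ := Finset.mem_image.1 hX
      obtain ⟨W, hW, rfl⟩ := Finset.mem_image.1 hY
      have hZW : Z ≠ W := fun e => hne (by rw [e])
      rw [Finset.disjoint_left]
      rintro a haZ haW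
      obtain ⟨z, hz, rfl⟩ := Finset.mem_image.1 haZ
      obtain ⟨w, hw, hwz⟩ := Finset.mem_image.1 haW
      have : w = z := hinj (by exact_mod_cast fill_subset hP hW hw)
        (by exact_mod_cast fill_subset hP hZ hz) hwz
      subst this
      exact Finset.notMem_empty w
        ((hP.2.2.1 Z hZ W hW hZW).le_bot (Finset.mem_inter.2 ⟨hz, hw⟩))
    · ext a
      constructor
      · intro ha
        obtain ⟨A, hA, haA⟩ := Finset.mem_biUnion.1 ha
        obtain ⟨Z, hZ, rfl⟩ := Finset.mem_image.1 hA
        obtain ⟨z, hz, rfl⟩ := Finset.mem_image.1 haA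
        rw [← himg]
        exact Finset.mem_image_of_mem f (fill_subset hP hZ hz)
      · intro ha
        rw [← himg] at ha
        obtain ⟨z, hz, rfl⟩ := Finset.mem_image.1 ha
        rw [← hP.2.2.2] at hz
        obtain ⟨Z, hZ, hzZ⟩ := Finset.mem_biUnion.1 hz
        exact Finset.mem_biUnion.2 ⟨Z.image f, Finset.mem_image_of_mem _ hZ,
          Finset.mem_image_of_mem f hzZ⟩
  refine ⟨P', hfill', ?_⟩
  -- the equivalence of index types
  have hsurj : ∀ A : {A // A ∈ P'}, ∃ X : {A // A ∈ P}, X.1.image f = A.1 := by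
    rintro ⟨A, hA⟩
    obtain ⟨Z, hZ, rfl⟩ := Finset.mem_image.1 hA
    exact ⟨⟨Z, hZ⟩, rfl⟩
  have hbijE : Function.Bijective (fun X : {A // A ∈ P} =>
      (⟨X.1.image f, Finset.mem_image_of_mem _ X.2⟩ : {A // A ∈ P'})) := by
    constructor
    · rintro ⟨X, hX⟩ ⟨Y, hY⟩ hXY
      have := hXinj X (fill_subset hP hX) Y (fill_subset hP hY)
        (congrArg Subtype.val hXY)
      exact Subtype.ext this
    · rintro A
      obtain ⟨X, hX⟩ := hsurj A
      exact ⟨X, Subtype.ext hX⟩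
  set e := Equiv.ofBijective _ hbijE with he
  have hmat : (Matrix.of fun X Y : {A // A ∈ P} => bSet T X.1 Y.1)
      = (Matrix.of fun X Y : {A // A ∈ P'} => bSet T' X.1 Y.1).submatrix e e := by
    ext X Y
    have heX : (e X).1 = X.1.image f := by simp [he]
    have heY : (e Y).1 = Y.1.image f := by simp [he]
    simp only [Matrix.submatrix_apply, Matrix.of_apply, heX, heY]
    unfold bSet
    rw [Finset.sum_image (fun x hx y hy hxy => hinj
      (by exact_mod_cast fill_subset hP X.2 hx)
      (by exact_mod_cast fill_subset hP X.2 hy) hxy)]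
    refine Finset.sum_congr rfl fun x hx => ?_
    rw [Finset.sum_image (fun a ha b hb hab => hinj
      (by exact_mod_cast fill_subset hP Y.2 ha)
      (by exact_mod_cast fill_subset hP Y.2 hb) hab)]
    refine Finset.sum_congr rfl fun y hy => ?_
    exact (hfb x (fill_subset hP X.2 hx) y (fill_subset hP Y.2 hy)).symm
  unfold sigmaFill
  rw [hmat, Matrix.rank_submatrix]

lemma bSet_congr {T T' : PreBM R} (hb : ∀ x ∈ T.G, ∀ y ∈ T.G, T'.b x y = T.b x y)
    {X Y : Finset ℕ} (hX : X ⊆ T.G) (hY : Y ⊆ T.G) : bSet T X Y = bSet T' X Y :=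
  Finset.sum_congr rfl fun g hg => Finset.sum_congr rfl fun h hh =>
    (hb g (hX hg) h (hY hh)).symm

lemma biUnion_erase' {P : Finset (Finset ℕ)}
    (hdisj : ∀ A ∈ P, ∀ B ∈ P, A ≠ B → Disjoint A B) {X : Finset ℕ} (hX : X ∈ P) :
    (P.erase X).biUnion id = P.biUnion id \ X := by
  ext a
  simp only [Finset.mem_biUnion, Finset.mem_erase, id, Finset.mem_sdiff]
  constructor
  · rintro ⟨Z, ⟨hZX, hZ⟩, ha⟩
    refine ⟨⟨Z, hZ, ha⟩, fun haX => ?_⟩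
    exact Finset.notMem_empty a
      ((hdisj Z hZ X hX hZX).le_bot (Finset.mem_inter.2 ⟨ha, haX⟩))
  · rintro ⟨⟨Z, hZ, ha⟩, haX⟩
    exact ⟨Z, ⟨fun h => haX (h ▸ ha), hZ⟩, ha⟩


lemma ext1_fwd {T T' : PreBM R} (hT : IsBM T) (hT' : IsBM T') (h : IsExt1 T T')
    (P : Finset (Finset ℕ)) (hP : IsSimpleFilling T P) :
    ∃ P', IsSimpleFilling T' P' ∧ sigmaFill T' P' ≤ sigmaFill T P := by
  classical
  obtain ⟨hs, g, hgG, hG', hbb, hann⟩ := h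
  have hGsub : T.G ⊆ T'.G := hG' ▸ Finset.subset_insert _ _
  have hgP : ({g} : Finset ℕ) ∉ P := fun hmem => hgG (fill_subset hP hmem (Finset.mem_singleton_self g))
  set P' : Finset (Finset ℕ) := insert {g} P with hP'def
  have hfill' : IsSimpleFilling T' P' := by
    refine ⟨?_, ?_, ?_, ?_⟩
    · rw [hs]
      exact Finset.mem_insert_of_mem hP.1
    · intro X hX
      rcases Finset.mem_insert.1 hX with rfl | hX
      · simp
      · exact hP.2.1 X hX
    · intro A hA B hB hne
      rcases Finset.mem_insert.1 hA with rfl | hA <;>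
        rcases Finset.mem_insert.1 hB with rfl | hB
      · exact absurd rfl hne
      · simpa using fun hgB => hgG (fill_subset hP hB hgB)
      · simpa using fun hgA => hgG (fill_subset hP hA hgA)
      · exact hP.2.2.1 A hA B hB hne
    · rw [hP'def, Finset.biUnion_insert, hP.2.2.2, hG']
      exact (Finset.insert_eq g T.G).symm
  refine ⟨P', hfill', ?_⟩
  refine sigma_le T' T T' hT' P P'
    (fun X hX => (fill_subset hP hX).trans hGsub)
    (fun X hX => fill_subset hfill' hX)
    (fun X hX Y hY => bSet_congr hbb (fill_subset hP hX) (fill_subset hP hY))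
    (fun X hX Y hY => rfl)
    (fun X X' => if X = {g} then 0 else (if X' = X then 1 else 0)) ?_
  intro X hX w hw
  by_cases hXg : X = {g}
  · subst hXg
    simp [hann w hw]
  · have hXP : X ∈ P := (Finset.mem_insert.1 hX).resolve_left hXg
    simp only [if_neg hXg, ite_mul, one_mul, zero_mul, Finset.sum_ite_eq']
    rw [if_pos hXP]

lemma ext1_bwd {T T' : PreBM R} (hT : IsBM T) (hT' : IsBM T') (h : IsExt1 T T')
    (P' : Finset (Finset ℕ)) (hP' : IsSimpleFilling T' P') :
    ∃ P, IsSimpleFilling T P ∧ sigmaFill T P ≤ sigmaFill T' P' := by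
  classical
  obtain ⟨hs, g, hgG, hG', hbb, hann⟩ := h
  have hgs : g ≠ T'.s := fun e => hgG (e ▸ hs ▸ hT.1)
  have hgin : g ∈ T'.G := hG' ▸ Finset.mem_insert_self _ _
  have hgin' := hgin
  rw [← hP'.2.2.2] at hgin'
  obtain ⟨X, hX, hgX⟩ := Finset.mem_biUnion.1 hgin'
  simp only [id_eq] at hgX
  have hXs : ({T'.s} : Finset ℕ) ≠ X := by
    rintro rfl
    exact hgs (Finset.mem_singleton.1 hgX)
  set N : Finset ℕ := X.erase g with hN
  set P : Finset (Finset ℕ) := insert N (P'.erase X) with hPdef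
  have hsP : ({T.s} : Finset ℕ) ∈ P := by
    rw [← hs]
    exact Finset.mem_insert_of_mem (Finset.mem_erase.2 ⟨hXs, hP'.1⟩)
  have hfill : IsSimpleFilling T P := by
    refine ⟨hsP, ?_, ?_, ?_⟩
    · intro A hA
      rcases Finset.mem_insert.1 hA with rfl | hA
      · exact le_trans (Finset.card_erase_le) (hP'.2.1 X hX)
      · exact hP'.2.1 A (Finset.mem_of_mem_erase hA)
    · intro A hA B hB hne
      rcases Finset.mem_insert.1 hA with rfl | hA <;>
        rcases Finset.mem_insert.1 hB with rfl | hB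
      · exact absurd rfl hne
      · exact Finset.disjoint_of_subset_left (Finset.erase_subset _ _)
          (hP'.2.2.1 X hX B (Finset.mem_of_mem_erase hB)
            (Ne.symm (Finset.mem_erase.1 hB).1))
      · exact Finset.disjoint_of_subset_right (Finset.erase_subset _ _)
          (hP'.2.2.1 A (Finset.mem_of_mem_erase hA) X hX (Finset.mem_erase.1 hA).1)
      · exact hP'.2.2.1 A (Finset.mem_of_mem_erase hA) B (Finset.mem_of_mem_erase hB) hne
    · rw [hPdef, Finset.biUnion_insert, biUnion_erase' hP'.2.2.1 hX, hP'.2.2.2]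
      ext a
      simp only [Finset.mem_union, Finset.mem_erase, Finset.mem_sdiff, hN, id_eq]
      constructor
      · rintro (⟨hag, haX⟩ | ⟨haG, haX⟩)
        · have : a ∈ T'.G := fill_subset hP' hX haX
          rw [hG'] at this
          exact (Finset.mem_insert.1 this).resolve_left hag
        · rw [hG'] at haG
          exact (Finset.mem_insert.1 haG).resolve_left (fun e => haX (e ▸ hgX))
      · intro haG
        have hag : a ≠ g := fun e => hgG (e ▸ haG)
        by_cases haX : a ∈ X
        · exact Or.inl ⟨hag, haX⟩
        · exact Or.inr ⟨hG' ▸ Finset.mem_insert_of_mem haG, haX⟩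
  refine ⟨P, hfill, ?_⟩
  refine sigma_le T' T' T hT' P' P
    (fun A hA => fill_subset hP' hA)
    (fun A hA => (fill_subset hfill hA).trans (hG' ▸ Finset.subset_insert _ _))
    (fun A hA B hB => rfl)
    (fun A hA B hB => bSet_congr hbb (fill_subset hfill hA) (fill_subset hfill hB))
    (fun Z Z' => if Z = N then (if Z' = X then 1 else 0) else (if Z' = Z then 1 else 0)) ?_
  intro Z hZ w hw
  by_cases hZN : Z = N
  · subst hZN
    simp only [eq_self_iff_true, if_true, ite_mul, one_mul, zero_mul, Finset.sum_ite_eq']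
    rw [if_pos hX, hN, ← Finset.sum_erase_add X (fun a => T'.b a w) hgX, hann w hw, add_zero]
  · have hZP : Z ∈ P' := Finset.mem_of_mem_erase ((Finset.mem_insert.1 hZ).resolve_left hZN)
    simp only [if_neg hZN, ite_mul, one_mul, zero_mul, Finset.sum_ite_eq']
    rw [if_pos hZP]

lemma ext2_fwd {T T' : PreBM R} (hT : IsBM T) (hT' : IsBM T') (h : IsExt2 T T')
    (P : Finset (Finset ℕ)) (hP : IsSimpleFilling T P) :
    ∃ P', IsSimpleFilling T' P' ∧ sigmaFill T' P' ≤ sigmaFill T P := by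
  classical
  obtain ⟨hs, g, hgG, hG', hbb, hcore⟩ := h
  have hGsub : T.G ⊆ T'.G := hG' ▸ Finset.subset_insert _ _
  have hgP : ({g} : Finset ℕ) ∉ P :=
    fun hmem => hgG (fill_subset hP hmem (Finset.mem_singleton_self g))
  set P' : Finset (Finset ℕ) := insert {g} P with hP'def
  have hfill' : IsSimpleFilling T' P' := by
    refine ⟨?_, ?_, ?_, ?_⟩
    · rw [hs]
      exact Finset.mem_insert_of_mem hP.1
    · intro X hX
      rcases Finset.mem_insert.1 hX with rfl | hX
      · simp
      · exact hP.2.1 X hX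
    · intro A hA B hB hne
      rcases Finset.mem_insert.1 hA with rfl | hA <;>
        rcases Finset.mem_insert.1 hB with rfl | hB
      · exact absurd rfl hne
      · simpa using fun hgB => hgG (fill_subset hP hB hgB)
      · simpa using fun hgA => hgG (fill_subset hP hA hgA)
      · exact hP.2.2.1 A hA B hB hne
    · rw [hP'def, Finset.biUnion_insert, hP.2.2.2, hG']
      exact (Finset.insert_eq g T.G).symm
  refine ⟨P', hfill', ?_⟩
  refine sigma_le T' T T' hT' P P'
    (fun X hX => (fill_subset hP hX).trans hGsub)
    (fun X hX => fill_subset hfill' hX)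
    (fun X hX Y hY => bSet_congr hbb (fill_subset hP hX) (fill_subset hP hY))
    (fun X hX Y hY => rfl)
    (fun X X' => if X = {g} then (if X' = ({T.s} : Finset ℕ) then 1 else 0)
      else (if X' = X then 1 else 0)) ?_
  intro X hX w hw
  by_cases hXg : X = {g}
  · subst hXg
    simp only [eq_self_iff_true, if_true, ite_mul, one_mul, zero_mul,
      Finset.sum_ite_eq', Finset.sum_singleton]
    rw [hcore w hw, hs, if_pos hP.1]
  · have hXP : X ∈ P := (Finset.mem_insert.1 hX).resolve_left hXg
    simp only [if_neg hXg, ite_mul, one_mul, zero_mul, Finset.sum_ite_eq']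
    rw [if_pos hXP]

lemma ext2_bwd {T T' : PreBM R} (hT : IsBM T) (hT' : IsBM T') (h : IsExt2 T T')
    (P' : Finset (Finset ℕ)) (hP' : IsSimpleFilling T' P') :
    ∃ P, IsSimpleFilling T P ∧ sigmaFill T P ≤ sigmaFill T' P' := by
  classical
  obtain ⟨hs, g, hgG, hG', hbb, hcore⟩ := h
  have hgs : g ≠ T'.s := fun e => hgG (e ▸ hs ▸ hT.1)
  have hgin : g ∈ T'.G := hG' ▸ Finset.mem_insert_self _ _
  have hgin' := hgin
  rw [← hP'.2.2.2] at hgin'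
  obtain ⟨X, hX, hgX⟩ := Finset.mem_biUnion.1 hgin'
  simp only [id_eq] at hgX
  have hXs : ({T'.s} : Finset ℕ) ≠ X := by
    rintro rfl
    exact hgs (Finset.mem_singleton.1 hgX)
  set N : Finset ℕ := X.erase g with hN
  set P : Finset (Finset ℕ) := insert N (P'.erase X) with hPdef
  have hsP : ({T.s} : Finset ℕ) ∈ P := by
    rw [← hs]
    exact Finset.mem_insert_of_mem (Finset.mem_erase.2 ⟨hXs, hP'.1⟩)
  have hfill : IsSimpleFilling T P := by
    refine ⟨hsP, ?_, ?_, ?_⟩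
    · intro A hA
      rcases Finset.mem_insert.1 hA with rfl | hA
      · exact le_trans (Finset.card_erase_le) (hP'.2.1 X hX)
      · exact hP'.2.1 A (Finset.mem_of_mem_erase hA)
    · intro A hA B hB hne
      rcases Finset.mem_insert.1 hA with rfl | hA <;>
        rcases Finset.mem_insert.1 hB with rfl | hB
      · exact absurd rfl hne
      · exact Finset.disjoint_of_subset_left (Finset.erase_subset _ _)
          (hP'.2.2.1 X hX B (Finset.mem_of_mem_erase hB)
            (Ne.symm (Finset.mem_erase.1 hB).1))
      · exact Finset.disjoint_of_subset_right (Finset.erase_subset _ _)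
          (hP'.2.2.1 A (Finset.mem_of_mem_erase hA) X hX (Finset.mem_erase.1 hA).1)
      · exact hP'.2.2.1 A (Finset.mem_of_mem_erase hA) B (Finset.mem_of_mem_erase hB) hne
    · rw [hPdef, Finset.biUnion_insert, biUnion_erase' hP'.2.2.1 hX, hP'.2.2.2]
      ext a
      simp only [Finset.mem_union, Finset.mem_erase, Finset.mem_sdiff, hN, id_eq]
      constructor
      · rintro (⟨hag, haX⟩ | ⟨haG, haX⟩)
        · have : a ∈ T'.G := fill_subset hP' hX haX
          rw [hG'] at this
          exact (Finset.mem_insert.1 this).resolve_left hag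
        · rw [hG'] at haG
          exact (Finset.mem_insert.1 haG).resolve_left (fun e => haX (e ▸ hgX))
      · intro haG
        have hag : a ≠ g := fun e => hgG (e ▸ haG)
        by_cases haX : a ∈ X
        · exact Or.inl ⟨hag, haX⟩
        · exact Or.inr ⟨hG' ▸ Finset.mem_insert_of_mem haG, haX⟩
  refine ⟨P, hfill, ?_⟩
  refine sigma_le T' T' T hT' P' P
    (fun A hA => fill_subset hP' hA)
    (fun A hA => (fill_subset hfill hA).trans (hG' ▸ Finset.subset_insert _ _))
    (fun A hA B hB => rfl)
    (fun A hA B hB => bSet_congr hbb (fill_subset hfill hA) (fill_subset hfill hB))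
    (fun Z Z' => if Z = N then
        ((if Z' = X then 1 else 0) - (if Z' = ({T'.s} : Finset ℕ) then 1 else 0))
      else (if Z' = Z then 1 else 0)) ?_
  intro Z hZ w hw
  by_cases hZN : Z = N
  · subst hZN
    simp only [eq_self_iff_true, if_true, sub_mul, ite_mul, one_mul, zero_mul,
      Finset.sum_sub_distrib, Finset.sum_ite_eq']
    rw [if_pos hX, if_pos hP'.1, hN, Finset.sum_singleton,
      ← Finset.sum_erase_add X (fun a => T'.b a w) hgX, hcore w hw]
    ring
  · have hZP : Z ∈ P' := Finset.mem_of_mem_erase ((Finset.mem_insert.1 hZ).resolve_left hZN)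
    simp only [if_neg hZN, ite_mul, one_mul, zero_mul, Finset.sum_ite_eq']
    rw [if_pos hZP]

lemma ext3_fwd {T T' : PreBM R} (hT : IsBM T) (hT' : IsBM T') (h : IsExt3 T T')
    (P : Finset (Finset ℕ)) (hP : IsSimpleFilling T P) :
    ∃ P', IsSimpleFilling T' P' ∧ sigmaFill T' P' ≤ sigmaFill T P := by
  classical
  obtain ⟨hs, g₁, g₂, hg₁G, hg₂G, hgg, hG', hbb, hpair⟩ := h
  have hGsub : T.G ⊆ T'.G := by
    rw [hG']
    exact (Finset.subset_insert _ _).trans (Finset.subset_insert _ _)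
  have hgP : ({g₁, g₂} : Finset ℕ) ∉ P :=
    fun hmem => hg₁G (fill_subset hP hmem (Finset.mem_insert_self _ _))
  set P' : Finset (Finset ℕ) := insert {g₁, g₂} P with hP'def
  have hfill' : IsSimpleFilling T' P' := by
    refine ⟨?_, ?_, ?_, ?_⟩
    · rw [hs]
      exact Finset.mem_insert_of_mem hP.1
    · intro X hX
      rcases Finset.mem_insert.1 hX with rfl | hX
      · exact Finset.card_insert_le _ _ |>.trans (by simp)
      · exact hP.2.1 X hX
    · intro A hA B hB hne
      rcases Finset.mem_insert.1 hA with rfl | hA' <;>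
        rcases Finset.mem_insert.1 hB with rfl | hB'
      · exact absurd rfl hne
      · rw [Finset.disjoint_left]
        intro a ha haB
        rcases Finset.mem_insert.1 ha with rfl | ha'
        · exact hg₁G (fill_subset hP hB' haB)
        · exact hg₂G (fill_subset hP hB' (Finset.mem_singleton.1 ha' ▸ haB))
      · rw [Finset.disjoint_right]
        intro a ha haA
        rcases Finset.mem_insert.1 ha with rfl | ha'
        · exact hg₁G (fill_subset hP hA' haA)
        · exact hg₂G (fill_subset hP hA' (Finset.mem_singleton.1 ha' ▸ haA))
      · exact hP.2.2.1 A hA' B hB' hne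
    · rw [hP'def, Finset.biUnion_insert, hP.2.2.2, hG']
      ext a
      simp only [Finset.mem_union, Finset.mem_insert, Finset.mem_singleton, id_eq]
      tauto
  refine ⟨P', hfill', ?_⟩
  refine sigma_le T' T T' hT' P P'
    (fun X hX => (fill_subset hP hX).trans hGsub)
    (fun X hX => fill_subset hfill' hX)
    (fun X hX Y hY => bSet_congr hbb (fill_subset hP hX) (fill_subset hP hY))
    (fun X hX Y hY => rfl)
    (fun X X' => if X = {g₁, g₂} then (if X' = ({T.s} : Finset ℕ) then 1 else 0)
      else (if X' = X then 1 else 0)) ?_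
  intro X hX w hw
  by_cases hXg : X = {g₁, g₂}
  · subst hXg
    simp only [eq_self_iff_true, if_true, ite_mul, one_mul, zero_mul,
      Finset.sum_ite_eq']
    rw [if_pos hP.1, Finset.sum_pair hgg, Finset.sum_singleton, hpair w hw, hs]
  · have hXP : X ∈ P := (Finset.mem_insert.1 hX).resolve_left hXg
    simp only [if_neg hXg, ite_mul, one_mul, zero_mul, Finset.sum_ite_eq']
    rw [if_pos hXP]

lemma ext3_bwd {T T' : PreBM R} (hT : IsBM T) (hT' : IsBM T') (h : IsExt3 T T')
    (P' : Finset (Finset ℕ)) (hP' : IsSimpleFilling T' P') :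
    ∃ P, IsSimpleFilling T P ∧ sigmaFill T P ≤ sigmaFill T' P' := by
  classical
  obtain ⟨hs, g₁, g₂, hg₁G, hg₂G, hgg, hG', hbb, hpair⟩ := h
  have hg₁s : g₁ ≠ T'.s := fun e => hg₁G (e ▸ hs ▸ hT.1)
  have hg₂s : g₂ ≠ T'.s := fun e => hg₂G (e ▸ hs ▸ hT.1)
  have hGsub : T.G ⊆ T'.G := by
    rw [hG']
    exact (Finset.subset_insert _ _).trans (Finset.subset_insert _ _)
  have hg₁in : g₁ ∈ T'.G := hG' ▸ Finset.mem_insert_self _ _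
  have hg₂in : g₂ ∈ T'.G := by
    rw [hG']
    exact Finset.mem_insert_of_mem (Finset.mem_insert_self _ _)
  have hx1 := hg₁in
  rw [← hP'.2.2.2] at hx1
  obtain ⟨X₁, hX₁, hg₁X⟩ := Finset.mem_biUnion.1 hx1
  simp only [id_eq] at hg₁X
  have hx2 := hg₂in
  rw [← hP'.2.2.2] at hx2
  obtain ⟨X₂, hX₂, hg₂X⟩ := Finset.mem_biUnion.1 hx2
  simp only [id_eq] at hg₂X
  have hX₁s : ({T'.s} : Finset ℕ) ≠ X₁ := by
    rintro rfl
    exact hg₁s (Finset.mem_singleton.1 hg₁X)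
  have hX₂s : ({T'.s} : Finset ℕ) ≠ X₂ := by
    rintro rfl
    exact hg₂s (Finset.mem_singleton.1 hg₂X)
  have hTG : ∀ a : ℕ, a ∈ T.G ↔ (a ∈ T'.G ∧ a ≠ g₁ ∧ a ≠ g₂) := by
    intro a
    constructor
    · intro ha
      exact ⟨hGsub ha, fun e => hg₁G (e ▸ ha), fun e => hg₂G (e ▸ ha)⟩
    · rintro ⟨ha, h1, h2⟩
      rw [hG'] at ha
      rcases Finset.mem_insert.1 ha with rfl | ha
      · exact absurd rfl h1
      rcases Finset.mem_insert.1 ha with rfl | ha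
      · exact absurd rfl h2
      exact ha
  by_cases hcase : g₂ ∈ X₁
  · -- the pair lies in one block, which must be {g₁, g₂}
    have hX12 : X₁ = ({g₁, g₂} : Finset ℕ) := by
      refine (Finset.eq_of_subset_of_card_le
        (Finset.insert_subset hg₁X (Finset.singleton_subset_iff.2 hcase)) ?_).symm
      rw [Finset.card_pair hgg]
      exact hP'.2.1 X₁ hX₁
    set P : Finset (Finset ℕ) := P'.erase X₁ with hPdef
    have hfill : IsSimpleFilling T P := by
      refine ⟨?_, ?_, ?_, ?_⟩
      · rw [← hs]
        exact Finset.mem_erase.2 ⟨hX₁s, hP'.1⟩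
      · intro A hA
        exact hP'.2.1 A (Finset.mem_of_mem_erase hA)
      · intro A hA B hB hne
        exact hP'.2.2.1 A (Finset.mem_of_mem_erase hA) B (Finset.mem_of_mem_erase hB) hne
      · rw [hPdef, biUnion_erase' hP'.2.2.1 hX₁, hP'.2.2.2]
        ext a
        simp only [Finset.mem_sdiff, hTG a, hX12, Finset.mem_insert, Finset.mem_singleton]
        tauto
    refine ⟨P, hfill, ?_⟩
    refine sigma_le T' T' T hT' P' P
      (fun A hA => fill_subset hP' hA)
      (fun A hA => (fill_subset hfill hA).trans hGsub)
      (fun A hA B hB => rfl)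
      (fun A hA B hB => bSet_congr hbb (fill_subset hfill hA) (fill_subset hfill hB))
      (fun Z Z' => if Z' = Z then 1 else 0) ?_
    intro Z hZ w hw
    have hZP : Z ∈ P' := Finset.mem_of_mem_erase hZ
    simp only [ite_mul, one_mul, zero_mul, Finset.sum_ite_eq']
    rw [if_pos hZP]
  · -- the pair lies in two distinct blocks
    have hX₁₂ : X₂ ≠ X₁ := fun e => hcase (e ▸ hg₂X)
    have hdisj12 : Disjoint X₁ X₂ := hP'.2.2.1 X₁ hX₁ X₂ hX₂ (Ne.symm hX₁₂)
    have hg₁X₂ : g₁ ∉ X₂ := Finset.disjoint_left.1 hdisj12 hg₁X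
    have hdisjE : Disjoint (X₁.erase g₁) (X₂.erase g₂) :=
      Finset.disjoint_of_subset_left (Finset.erase_subset _ _)
        (Finset.disjoint_of_subset_right (Finset.erase_subset _ _) hdisj12)
    set N : Finset ℕ := X₁.erase g₁ ∪ X₂.erase g₂ with hN
    set P : Finset (Finset ℕ) := insert N ((P'.erase X₁).erase X₂) with hPdef
    have hX₂' : X₂ ∈ P'.erase X₁ := Finset.mem_erase.2 ⟨hX₁₂, hX₂⟩
    have hdisjE' : ∀ A ∈ P'.erase X₁, ∀ B ∈ P'.erase X₁, A ≠ B → Disjoint A B :=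
      fun A hA B hB hne => hP'.2.2.1 A (Finset.mem_of_mem_erase hA)
        B (Finset.mem_of_mem_erase hB) hne
    have hfill : IsSimpleFilling T P := by
      refine ⟨?_, ?_, ?_, ?_⟩
      · rw [← hs]
        exact Finset.mem_insert_of_mem
          (Finset.mem_erase.2 ⟨hX₂s, Finset.mem_erase.2 ⟨hX₁s, hP'.1⟩⟩)
      · intro A hA
        rcases Finset.mem_insert.1 hA with rfl | hA'
        · have h1 : (X₁.erase g₁).card ≤ 1 := by
            rw [Finset.card_erase_of_mem hg₁X]
            have := hP'.2.1 X₁ hX₁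
            omega
          have h2 : (X₂.erase g₂).card ≤ 1 := by
            rw [Finset.card_erase_of_mem hg₂X]
            have := hP'.2.1 X₂ hX₂
            omega
          calc (X₁.erase g₁ ∪ X₂.erase g₂).card
              ≤ (X₁.erase g₁).card + (X₂.erase g₂).card := Finset.card_union_le _ _
            _ ≤ 2 := by omega
        · exact hP'.2.1 A (Finset.mem_of_mem_erase (Finset.mem_of_mem_erase hA'))
      · intro A hA B hB hne
        rcases Finset.mem_insert.1 hA with rfl | hA' <;>
          rcases Finset.mem_insert.1 hB with rfl | hB'
        · exact absurd rfl hne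
        · have hBX₁ : B ≠ X₁ := (Finset.mem_erase.1 (Finset.mem_of_mem_erase hB')).1
          have hBX₂ : B ≠ X₂ := (Finset.mem_erase.1 hB').1
          have hBP : B ∈ P' := Finset.mem_of_mem_erase (Finset.mem_of_mem_erase hB')
          exact Finset.disjoint_union_left.2
            ⟨Finset.disjoint_of_subset_left (Finset.erase_subset _ _)
              (hP'.2.2.1 X₁ hX₁ B hBP (Ne.symm hBX₁)),
             Finset.disjoint_of_subset_left (Finset.erase_subset _ _)
              (hP'.2.2.1 X₂ hX₂ B hBP (Ne.symm hBX₂))⟩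
        · have hAX₁ : A ≠ X₁ := (Finset.mem_erase.1 (Finset.mem_of_mem_erase hA')).1
          have hAX₂ : A ≠ X₂ := (Finset.mem_erase.1 hA').1
          have hAP : A ∈ P' := Finset.mem_of_mem_erase (Finset.mem_of_mem_erase hA')
          exact Finset.disjoint_union_right.2
            ⟨Finset.disjoint_of_subset_right (Finset.erase_subset _ _)
              (hP'.2.2.1 A hAP X₁ hX₁ hAX₁),
             Finset.disjoint_of_subset_right (Finset.erase_subset _ _)
              (hP'.2.2.1 A hAP X₂ hX₂ hAX₂)⟩
        · exact hP'.2.2.1 A (Finset.mem_of_mem_erase (Finset.mem_of_mem_erase hA'))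
            B (Finset.mem_of_mem_erase (Finset.mem_of_mem_erase hB')) hne
      · rw [hPdef, Finset.biUnion_insert, biUnion_erase' hdisjE' hX₂',
          biUnion_erase' hP'.2.2.1 hX₁, hP'.2.2.2]
        ext a
        simp only [Finset.mem_union, Finset.mem_sdiff, hN, Finset.mem_erase, id_eq, hTG a]
        constructor
        · rintro ((⟨hag, haX⟩ | ⟨hag, haX⟩) | ⟨⟨haG, h1⟩, h2⟩)
          · exact ⟨fill_subset hP' hX₁ haX, hag, fun e => hcase (e ▸ haX)⟩
          · exact ⟨fill_subset hP' hX₂ haX, fun e => hg₁X₂ (e ▸ haX), hag⟩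
          · exact ⟨haG, fun e => h1 (e ▸ hg₁X), fun e => h2 (e ▸ hg₂X)⟩
        · rintro ⟨haG, h1, h2⟩
          by_cases haX₁ : a ∈ X₁
          · exact Or.inl (Or.inl ⟨h1, haX₁⟩)
          by_cases haX₂ : a ∈ X₂
          · exact Or.inl (Or.inr ⟨h2, haX₂⟩)
          exact Or.inr ⟨⟨haG, haX₁⟩, haX₂⟩
    refine ⟨P, hfill, ?_⟩
    refine sigma_le T' T' T hT' P' P
      (fun A hA => fill_subset hP' hA)
      (fun A hA => (fill_subset hfill hA).trans hGsub)
      (fun A hA B hB => rfl)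
      (fun A hA B hB => bSet_congr hbb (fill_subset hfill hA) (fill_subset hfill hB))
      (fun Z Z' => if Z = N then
          ((if Z' = X₁ then 1 else 0) + (if Z' = X₂ then 1 else 0)
            - (if Z' = ({T'.s} : Finset ℕ) then 1 else 0))
        else (if Z' = Z then 1 else 0)) ?_
    intro Z hZ w hw
    by_cases hZN : Z = N
    · subst hZN
      simp only [eq_self_iff_true, if_true, add_mul, sub_mul, ite_mul, one_mul, zero_mul,
        Finset.sum_add_distrib, Finset.sum_sub_distrib, Finset.sum_ite_eq']
      rw [if_pos hX₁, if_pos hX₂, if_pos hP'.1, hN, Finset.sum_union hdisjE,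
        Finset.sum_singleton]
      have h1 := Finset.sum_erase_add X₁ (fun a => T'.b a w) hg₁X
      have h2 := Finset.sum_erase_add X₂ (fun a => T'.b a w) hg₂X
      have h3 := hpair w hw
      linear_combination h1 + h2 - h3
    · have hZP : Z ∈ P' := Finset.mem_of_mem_erase (Finset.mem_of_mem_erase
        ((Finset.mem_insert.1 hZ).resolve_left hZN))
      simp only [if_neg hZN, ite_mul, one_mul, zero_mul, Finset.sum_ite_eq']
      rw [if_pos hZP]


lemma step_genus_eq {R : Type*} [CommRing R] [IsDomain R] {T T' : PreBM R}
    (h : StepExt T T' ∨ (IsBM T ∧ IsBM T' ∧ BMIso T T')) : bmGenus T = bmGenus T' := by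
  rcases h with ⟨hT, hT', hext⟩ | ⟨hT, hT', hiso⟩
  · rcases hext with he | he | he
    · exact le_antisymm
        (genus_le (fill_exists hT') (fun P' hP' => ext1_bwd hT hT' he P' hP'))
        (genus_le (fill_exists hT) (fun P hP => ext1_fwd hT hT' he P hP))
    · exact le_antisymm
        (genus_le (fill_exists hT') (fun P' hP' => ext2_bwd hT hT' he P' hP'))
        (genus_le (fill_exists hT) (fun P hP => ext2_fwd hT hT' he P hP))
    · exact le_antisymm
        (genus_le (fill_exists hT') (fun P' hP' => ext3_bwd hT hT' he P' hP'))
        (genus_le (fill_exists hT) (fun P hP => ext3_fwd hT hT' he P hP))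
  · refine le_antisymm ?_ ?_
    · exact genus_le (fill_exists hT') (fun P hP =>
        (iso_fill_transfer hT' hT (bmiso_symm hT hT' hiso) P hP).imp
          (fun P' hh => ⟨hh.1, le_of_eq hh.2⟩))
    · exact genus_le (fill_exists hT) (fun P hP =>
        (iso_fill_transfer hT hT' hiso P hP).imp (fun P' hh => ⟨hh.1, le_of_eq hh.2⟩))

lemma homologous_genus_eq {R : Type*} [CommRing R] [IsDomain R] {T T' : PreBM R}
    (h : Homologous T T') : bmGenus T = bmGenus T' := by
  induction h with
  | rel a b hr => exact step_genus_eq hr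
  | refl a => rfl
  | symm a b _ ih => exact ih.symm
  | trans a b c _ _ ih₁ ih₂ => exact ih₁.trans ih₂


/-- For any based matrix `T` over an integral domain,
`σ(T_•) = σ(T)` where `T_•` is a primitive based matrix homologous to `T`;
and any based matrix homologous to a hyperbolic based matrix is itself
hyperbolic. -/
theorem bmGenus_primitive_and_hyperbolic {R : Type*} [CommRing R] [IsDomain R] :
    (∀ T P : PreBM R, IsBM T → IsBM P → Primitive P → Homologous P T →
      bmGenus P = bmGenus T) ∧
    (∀ T T' : PreBM R, IsBM T → IsBM T' → Homologous T T' → Hyperbolic T' →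
      Hyperbolic T) := by
  constructor
  · intro T P hT hP hprim hhom
    exact homologous_genus_eq hhom
  · intro T T' hT hT' hhom hhyp
    unfold Hyperbolic at *
    rw [homologous_genus_eq hhom]
    exact hhyp
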